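/- Let N ≥ 1, M the N×N all-ones matrix, and B an N×N matrix with entries in {0,1} with exactly k ones. Then the vector (V, W) with V_j = N − √k and W_j = φ_j(B) − √k (where φ_j(B) is the j-th row sum of B) is an eigenvector of T = [[M, M],[B, M]] with eigenvalue N − √k, provided this vector is nonzero. -/

import Mathlib

open Matrix in
/-- the vector `(V,W)` with `V_j = N - √k`, `W_j = φ_j(B) - √k`,
provided it is nonzero, is an eigenvector of `T = [[M,M],[B,M]]` with eigenvalue `N - √k`. -/
theorem stmt2 (N : ℕ) (hN : 1 ≤ N) (k : ℕ)
    (B : Matrix (Fin N) (Fin N) ℝ)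
    (hB01 : ∀ i j, B i j = 0 ∨ B i j = 1)
    (hBk : ∑ i, ∑ j, B i j = (k : ℝ)) :
    let M : Matrix (Fin N) (Fin N) ℝ := fun _ _ => 1
    let T : Matrix (Fin N ⊕ Fin N) (Fin N ⊕ Fin N) ℝ := Matrix.fromBlocks M M B M
    let u : Fin N ⊕ Fin N → ℝ :=
      Sum.elim (fun _ => (N : ℝ) - Real.sqrt k) (fun j => (∑ i, B j i) - Real.sqrt k)
    u ≠ 0 → T.mulVec u = ((N : ℝ) - Real.sqrt k) • u ∧ u ≠ 0 := by
  intro M T u hu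
  refine ⟨?_, hu⟩
  have hsq : Real.sqrt k * Real.sqrt k = (k : ℝ) :=
    Real.mul_self_sqrt (Nat.cast_nonneg k)
  funext x
  cases x with
  | inl j =>
    simp only [T, u, mulVec, dotProduct, fromBlocks_apply₁₁, fromBlocks_apply₁₂,
      Fintype.sum_sum_type, Sum.elim_inl, Sum.elim_inr, one_mul, Pi.smul_apply,
      smul_eq_mul]
    simp only [M, one_mul]
    rw [Finset.sum_sub_distrib, Finset.sum_const, Finset.sum_const, Finset.sum_sub_distrib,
      hBk]
    simp only [Finset.card_univ, Fintype.card_fin, nsmul_eq_mul]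
    rw [Finset.sum_const]
    simp only [Finset.card_univ, Fintype.card_fin, nsmul_eq_mul]
    nlinarith [hsq]
  | inr j =>
    simp only [T, u, mulVec, dotProduct, fromBlocks_apply₂₁, fromBlocks_apply₂₂,
      Fintype.sum_sum_type, Sum.elim_inl, Sum.elim_inr, one_mul, Pi.smul_apply,
      smul_eq_mul]
    simp only [M, one_mul]
    rw [Finset.sum_sub_distrib, Finset.sum_const, ← Finset.sum_mul]
    simp only [Finset.card_univ, Fintype.card_fin, nsmul_eq_mul]
    rw [hBk]
    nlinarith [hsq]
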